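/- In the two-way crossed model with interaction, define for each column index j the linear EBLUP-error term U_j = γ̄_{·j} − h^{-1}Σ_{t=1}^h Ĥ^{(b)}_{jt}·β_t. Then for all 1 ≤ j, j' ≤ h, Cov(U_j, U_{j'}) = 𝟙{j = j'}·σγ²/g + (σβ²/h)·Ĥ^{(b)}_{jj'}. In particular Var(U_j) = σγ²/g + (σβ²/h)·Ĥ^{(b)}_{jj}, which is the paper's mean-squared-error approximation MSE_LSW(β̂_j). -/

import Mathlib

open Matrix MeasureTheory ProbabilityTheory BigOperators

/-- Covariance `Cov(X,Y) = E[XY] − E[X]E[Y]` of two real random variables. -/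
noncomputable def Cov {Ω : Type*} [MeasureSpace Ω] (X Y : Ω → ℝ) : ℝ :=
  (∫ ω, X ω * Y ω) - (∫ ω, X ω) * (∫ ω, Y ω)

/-- Centered covariate `w_{t(c)} = w_t − w̄` where `w̄ = h⁻¹ Σ_t w_t`. -/
noncomputable def wc (h q : ℕ) (w : Fin h → Fin q → ℝ) (t : Fin h) : Fin q → ℝ :=
  w t - (h : ℝ)⁻¹ • ∑ v : Fin h, w v

/-- `D̂_b = h⁻¹ Σ_t w_{t(c)} w_{t(c)}ᵀ`. -/
noncomputable def Dhatb (h q : ℕ) (w : Fin h → Fin q → ℝ) : Matrix (Fin q) (Fin q) ℝ :=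
  (h : ℝ)⁻¹ • ∑ t : Fin h, vecMulVec (wc h q w t) (wc h q w t)

/-- `Ĥ^{(b)}_{tv} = 1 + w_{t(c)}ᵀ D̂_b⁻¹ w_{v(c)}`. -/
noncomputable def Hhatb (h q : ℕ) (w : Fin h → Fin q → ℝ) (t v : Fin h) : ℝ :=
  1 + wc h q w t ⬝ᵥ ((Dhatb h q w)⁻¹ *ᵥ wc h q w v)

/- ### Auxiliary lemmas -/

lemma dot_vecMulVec {q : ℕ} (x y u : Fin q → ℝ) :
    x ⬝ᵥ (vecMulVec u u *ᵥ y) = (x ⬝ᵥ u) * (u ⬝ᵥ y) := by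
  simp only [dotProduct, mulVec, vecMulVec, Matrix.of_apply, Finset.sum_mul, Finset.mul_sum]
  rw [Finset.sum_comm]
  apply Finset.sum_congr rfl; intro i _
  apply Finset.sum_congr rfl; intro k _
  ring

lemma sum_mulVec' {q : ℕ} {ι : Type*} (s : Finset ι) (A : ι → Matrix (Fin q) (Fin q) ℝ)
    (y : Fin q → ℝ) : (∑ t ∈ s, A t) *ᵥ y = ∑ t ∈ s, A t *ᵥ y := by
  funext i
  simp only [mulVec, dotProduct, Matrix.sum_apply, Finset.sum_apply, Finset.sum_mul]
  rw [Finset.sum_comm]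

lemma sum_wc (h q : ℕ) (hh : 1 ≤ h) (w : Fin h → Fin q → ℝ) :
    ∑ t : Fin h, wc h q w t = 0 := by
  have hh0 : (h : ℝ) ≠ 0 := by positivity
  simp only [wc, Finset.sum_sub_distrib, Finset.sum_const, Finset.card_univ, Fintype.card_fin]
  rw [← Nat.cast_smul_eq_nsmul ℝ, smul_smul, mul_inv_cancel₀ hh0, one_smul, sub_self]

lemma Dhatb_symm (h q : ℕ) (w : Fin h → Fin q → ℝ) : (Dhatb h q w)ᵀ = Dhatb h q w := by
  ext i k
  simp only [Dhatb, transpose_apply, Matrix.smul_apply, Matrix.sum_apply, vecMulVec_apply,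
    smul_eq_mul]
  congr 1
  exact Finset.sum_congr rfl fun t _ => mul_comm _ _

/-- key matrix identity: `h⁻¹ Σ_t Ĥ_{jt} Ĥ_{j't} = Ĥ_{jj'}`. -/
lemma sum_Hhatb_mul (h q : ℕ) (hh : 1 ≤ h) (w : Fin h → Fin q → ℝ)
    (hD : IsUnit (Dhatb h q w).det) (j j' : Fin h) :
    ∑ t : Fin h, Hhatb h q w j t * Hhatb h q w j' t = (h : ℝ) * Hhatb h q w j j' := by
  set D := Dhatb h q w with hDdef
  set M := D⁻¹ with hM
  set u : Fin h → Fin q → ℝ := wc h q w with hu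
  have hh0 : (h : ℝ) ≠ 0 := by positivity
  have hMsymm : Mᵀ = M := by
    show (Dhatb h q w)⁻¹ᵀ = (Dhatb h q w)⁻¹
    rw [Matrix.transpose_nonsing_inv, Dhatb_symm]
  have hDM : D * M = 1 := Matrix.mul_nonsing_inv D hD
  -- rewrite dot products through M
  have key : ∀ x : Fin q → ℝ, ∀ t : Fin h, x ⬝ᵥ (M *ᵥ u t) = (x ᵥ* M) ⬝ᵥ u t := fun x t =>
    Matrix.dotProduct_mulVec x M (u t)
  have hsumu : ∑ t : Fin h, u t = 0 := sum_wc h q hh w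
  have hlin : ∀ x : Fin q → ℝ, ∑ t : Fin h, x ⬝ᵥ (M *ᵥ u t) = 0 := by
    intro x
    have : ∑ t : Fin h, (x ᵥ* M) ⬝ᵥ u t = (x ᵥ* M) ⬝ᵥ (∑ t : Fin h, u t) := by
      simp [dotProduct, Finset.mul_sum]
      rw [Finset.sum_comm]
    simp only [key, this, hsumu, dotProduct_zero]
  have hsumD : ∑ t : Fin h, vecMulVec (u t) (u t) = (h : ℝ) • D := by
    rw [hDdef, Dhatb, smul_smul, mul_inv_cancel₀ hh0, one_smul]
  have hvecMulb : ∀ x : Fin q → ℝ, x ᵥ* M = M *ᵥ x := by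
    intro x; rw [← hMsymm, Matrix.vecMul_transpose, hMsymm]
  have hquad : ∑ t : Fin h, (wc h q w j ⬝ᵥ (M *ᵥ u t)) * (wc h q w j' ⬝ᵥ (M *ᵥ u t))
      = (h : ℝ) * (wc h q w j ⬝ᵥ (M *ᵥ wc h q w j')) := by
    have step1 : ∀ t, (wc h q w j ⬝ᵥ (M *ᵥ u t)) * (wc h q w j' ⬝ᵥ (M *ᵥ u t))
        = (wc h q w j ᵥ* M) ⬝ᵥ (vecMulVec (u t) (u t) *ᵥ (wc h q w j' ᵥ* M)) := by
      intro t
      rw [dot_vecMulVec, key, key, dotProduct_comm (wc h q w j' ᵥ* M) (u t)]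
    calc ∑ t : Fin h, (wc h q w j ⬝ᵥ (M *ᵥ u t)) * (wc h q w j' ⬝ᵥ (M *ᵥ u t))
        = ∑ t : Fin h, (wc h q w j ᵥ* M) ⬝ᵥ (vecMulVec (u t) (u t) *ᵥ (wc h q w j' ᵥ* M)) := by
          exact Finset.sum_congr rfl fun t _ => step1 t
      _ = (wc h q w j ᵥ* M) ⬝ᵥ ((∑ t : Fin h, vecMulVec (u t) (u t)) *ᵥ (wc h q w j' ᵥ* M)) := by
          rw [sum_mulVec']
          simp only [dotProduct, Finset.sum_apply, Finset.mul_sum]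
          rw [Finset.sum_comm]
      _ = (wc h q w j ᵥ* M) ⬝ᵥ (((h : ℝ) • D) *ᵥ (wc h q w j' ᵥ* M)) := by rw [hsumD]
      _ = (h : ℝ) * ((wc h q w j ᵥ* M) ⬝ᵥ (D *ᵥ (wc h q w j' ᵥ* M))) := by
          rw [Matrix.smul_mulVec, dotProduct_smul, smul_eq_mul]
      _ = (h : ℝ) * (wc h q w j ⬝ᵥ (M *ᵥ wc h q w j')) := by
          rw [hvecMulb (wc h q w j'), Matrix.mulVec_mulVec, hDM, Matrix.one_mulVec,
            Matrix.dotProduct_mulVec]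
  -- expand the product
  have expand : ∀ t, Hhatb h q w j t * Hhatb h q w j' t
      = 1 + wc h q w j ⬝ᵥ (M *ᵥ u t) + wc h q w j' ⬝ᵥ (M *ᵥ u t)
        + (wc h q w j ⬝ᵥ (M *ᵥ u t)) * (wc h q w j' ⬝ᵥ (M *ᵥ u t)) := by
    intro t; simp only [Hhatb]; ring
  rw [Finset.sum_congr rfl fun t _ => expand t]
  simp only [Finset.sum_add_distrib, hlin, hquad, Finset.sum_const, Finset.card_univ,
    Fintype.card_fin, nsmul_eq_mul, add_zero]
  simp only [Hhatb]
  ring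

/-- Covariance of linear combinations of independent mean-zero L² variables. -/
lemma cov_lin {Ω : Type*} [MeasureSpace Ω] [IsProbabilityMeasure (ℙ : Measure Ω)]
    {ι : Type*} [Fintype ι] (Z : ι → Ω → ℝ)
    (hindep : iIndepFun Z ℙ)
    (hL2 : ∀ a, MemLp (Z a) 2 ℙ) (h0 : ∀ a, ∫ ω, Z a ω = 0) (c d : ι → ℝ) :
    Cov (fun ω => ∑ a, c a * Z a ω) (fun ω => ∑ a, d a * Z a ω)
      = ∑ a, c a * d a * ∫ ω, Z a ω * Z a ω := by
  have intZ : ∀ a, Integrable (Z a) ℙ := fun a => (hL2 a).integrable one_le_two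
  have prodInt : ∀ a b, Integrable (fun ω => Z a ω * Z b ω) ℙ := by
    intro a b
    by_cases hab : a = b
    · subst hab
      have := (hL2 a).integrable_sq
      simpa [sq] using this
    · exact (hindep.indepFun hab).integrable_mul (intZ a) (intZ b)
  have prodOff : ∀ a b, a ≠ b → ∫ ω, Z a ω * Z b ω = 0 := by
    intro a b hab
    have h2 : ∫ ω, Z a ω * Z b ω = (∫ ω, Z a ω) * ∫ ω, Z b ω :=
      (hindep.indepFun hab).integral_mul_eq_mul_integral (intZ a).aestronglyMeasurable (intZ b).aestronglyMeasurable
    rw [h2, h0 a, zero_mul]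
  have meanLin : ∀ e : ι → ℝ, ∫ ω, ∑ a, e a * Z a ω = 0 := by
    intro e
    rw [integral_finset_sum _ (fun a _ => (intZ a).const_mul (e a))]
    simp [integral_const_mul, h0]
  have prodExpand : (fun ω => (∑ a, c a * Z a ω) * ∑ b, d b * Z b ω)
      = fun ω => ∑ a, ∑ b, (c a * d b) * (Z a ω * Z b ω) := by
    funext ω
    rw [Finset.sum_mul_sum]
    exact Finset.sum_congr rfl fun a _ => Finset.sum_congr rfl fun b _ => by ring
  have intProd : ∫ ω, (∑ a, c a * Z a ω) * ∑ b, d b * Z b ω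
      = ∑ a, ∑ b, (c a * d b) * ∫ ω, Z a ω * Z b ω := by
    rw [prodExpand, integral_finset_sum _ (fun a _ => ?_)]
    · exact Finset.sum_congr rfl fun a _ => by
        rw [integral_finset_sum _ (fun b _ => ((prodInt a b).const_mul _))]
        exact Finset.sum_congr rfl fun b _ => integral_const_mul _ _
    · exact integrable_finset_sum _ (fun b _ => ((prodInt a b).const_mul _))
  rw [Cov, intProd, meanLin, meanLin, mul_zero, sub_zero]
  refine Finset.sum_congr rfl fun a _ => ?_
  rw [Finset.sum_eq_single a
    (fun b _ hba => by rw [prodOff a b (Ne.symm hba), mul_zero])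
    (fun habs => absurd (Finset.mem_univ a) habs)]

/-- In the two-way crossed model with interaction, the column linear EBLUP-error terms
`U_j = γ̄_{·j} − h⁻¹ Σ_t Ĥ^{(b)}_{jt} β_t` satisfy
`Cov(U_j, U_{j'}) = 𝟙{j=j'} σγ²/g + (σβ²/h) Ĥ^{(b)}_{jj'}`; in particular
`Var(U_j) = σγ²/g + (σβ²/h) Ĥ^{(b)}_{jj}`, the paper's MSE approximation for `β̂_j`. -/
theorem col_eblup_error_covariance_interaction {Ω : Type*} [MeasureSpace Ω]
    [IsProbabilityMeasure (ℙ : Measure Ω)]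
    (g h q : ℕ) (hg : 1 ≤ g) (hh : 1 ≤ h) (hq : 1 ≤ q)
    (w : Fin h → Fin q → ℝ) (hD : IsUnit (Dhatb h q w).det)
    (σβ2 σγ2 : ℝ) (hσβ : 0 ≤ σβ2) (hσγ : 0 ≤ σγ2)
    (β : Fin h → Ω → ℝ) (γ : Fin g × Fin h → Ω → ℝ)
    (hindep : iIndepFun (Sum.elim β γ) ℙ)
    (hβL2 : ∀ t, MemLp (β t) 2 ℙ) (hγL2 : ∀ ij, MemLp (γ ij) 2 ℙ)
    (hβ0 : ∀ t, ∫ ω, β t ω = 0) (hγ0 : ∀ ij, ∫ ω, γ ij ω = 0)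
    (hβvar : ∀ t, Cov (β t) (β t) = σβ2) (hγvar : ∀ ij, Cov (γ ij) (γ ij) = σγ2) :
    (∀ j j' : Fin h,
      Cov (fun ω => (g : ℝ)⁻¹ * ∑ i : Fin g, γ (i, j) ω
              - (h : ℝ)⁻¹ * ∑ t : Fin h, Hhatb h q w j t * β t ω)
          (fun ω => (g : ℝ)⁻¹ * ∑ i : Fin g, γ (i, j') ω
              - (h : ℝ)⁻¹ * ∑ t : Fin h, Hhatb h q w j' t * β t ω)
        = (if j = j' then σγ2 / g else 0) + σβ2 / h * Hhatb h q w j j') ∧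
    (∀ j : Fin h,
      Cov (fun ω => (g : ℝ)⁻¹ * ∑ i : Fin g, γ (i, j) ω
              - (h : ℝ)⁻¹ * ∑ t : Fin h, Hhatb h q w j t * β t ω)
          (fun ω => (g : ℝ)⁻¹ * ∑ i : Fin g, γ (i, j) ω
              - (h : ℝ)⁻¹ * ∑ t : Fin h, Hhatb h q w j t * β t ω)
        = σγ2 / g + σβ2 / h * Hhatb h q w j j) := by
  have hg0 : (g : ℝ) ≠ 0 := by positivity
  have hh0 : (h : ℝ) ≠ 0 := by positivity
  set Z : (Fin h ⊕ Fin g × Fin h) → Ω → ℝ := Sum.elim β γ with hZ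
  have hL2 : ∀ a, MemLp (Z a) 2 ℙ := by rintro (t | ij); exact hβL2 t; exact hγL2 ij
  have h0 : ∀ a, ∫ ω, Z a ω = 0 := by rintro (t | ij); exact hβ0 t; exact hγ0 ij
  -- variances as second moments
  have hβm : ∀ t, ∫ ω, β t ω * β t ω = σβ2 := by
    intro t; have := hβvar t; rw [Cov, hβ0 t, mul_zero, sub_zero] at this; exact this
  have hγm : ∀ ij, ∫ ω, γ ij ω * γ ij ω = σγ2 := by
    intro ij; have := hγvar ij; rw [Cov, hγ0 ij, mul_zero, sub_zero] at this; exact this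
  -- coefficient vectors
  set cf : Fin h → (Fin h ⊕ Fin g × Fin h) → ℝ := fun j =>
    Sum.elim (fun t => -((h : ℝ)⁻¹ * Hhatb h q w j t))
      (fun ij => if ij.2 = j then (g : ℝ)⁻¹ else 0) with hcf
  have hrep : ∀ j : Fin h,
      (fun ω => (g : ℝ)⁻¹ * ∑ i : Fin g, γ (i, j) ω
          - (h : ℝ)⁻¹ * ∑ t : Fin h, Hhatb h q w j t * β t ω)
      = fun ω => ∑ a : Fin h ⊕ Fin g × Fin h, cf j a * Z a ω := by
    intro j
    funext ω
    rw [Fintype.sum_sum_type]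
    have h2 : ∑ ij : Fin g × Fin h, cf j (Sum.inr ij) * Z (Sum.inr ij) ω
        = (g : ℝ)⁻¹ * ∑ i : Fin g, γ (i, j) ω := by
      rw [Fintype.sum_prod_type, Finset.mul_sum]
      refine Finset.sum_congr rfl fun i _ => ?_
      simp only [hcf, hZ, Sum.elim_inr, ite_mul, zero_mul]
      rw [Finset.sum_ite_eq' Finset.univ j (fun j0 => (g : ℝ)⁻¹ * γ (i, j0) ω)]
      simp
    have h1 : ∑ t : Fin h, cf j (Sum.inl t) * Z (Sum.inl t) ω
        = -((h : ℝ)⁻¹ * ∑ t : Fin h, Hhatb h q w j t * β t ω) := by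
      simp only [hcf, hZ, Sum.elim_inl, Finset.mul_sum, neg_mul, ← Finset.sum_neg_distrib]
      exact Finset.sum_congr rfl fun t _ => by ring
    rw [h1, h2]
    ring
  have main : ∀ j j' : Fin h,
      Cov (fun ω => (g : ℝ)⁻¹ * ∑ i : Fin g, γ (i, j) ω
              - (h : ℝ)⁻¹ * ∑ t : Fin h, Hhatb h q w j t * β t ω)
          (fun ω => (g : ℝ)⁻¹ * ∑ i : Fin g, γ (i, j') ω
              - (h : ℝ)⁻¹ * ∑ t : Fin h, Hhatb h q w j' t * β t ω)
        = (if j = j' then σγ2 / g else 0) + σβ2 / h * Hhatb h q w j j' := by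
    intro j j'
    rw [hrep j, hrep j', cov_lin Z hindep hL2 h0 (cf j) (cf j')]
    rw [Fintype.sum_sum_type]
    have hβpart : ∑ t : Fin h, cf j (Sum.inl t) * cf j' (Sum.inl t) * ∫ ω, Z (Sum.inl t) ω * Z (Sum.inl t) ω
        = σβ2 / h * Hhatb h q w j j' := by
      simp only [hcf, hZ, Sum.elim_inl, hβm]
      have : ∑ t : Fin h, -((h : ℝ)⁻¹ * Hhatb h q w j t) * -((h : ℝ)⁻¹ * Hhatb h q w j' t) * σβ2
          = (h : ℝ)⁻¹ * (h : ℝ)⁻¹ * σβ2 * ∑ t : Fin h, Hhatb h q w j t * Hhatb h q w j' t := by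
        rw [Finset.mul_sum]
        exact Finset.sum_congr rfl fun t _ => by ring
      rw [this, sum_Hhatb_mul h q hh w hD j j']
      field_simp
    have hγpart : ∑ ij : Fin g × Fin h, cf j (Sum.inr ij) * cf j' (Sum.inr ij) * ∫ ω, Z (Sum.inr ij) ω * Z (Sum.inr ij) ω
        = if j = j' then σγ2 / g else 0 := by
      simp only [hcf, hZ, Sum.elim_inr, hγm]
      rw [Fintype.sum_prod_type]
      by_cases hjj : j = j'
      · subst hjj
        have : ∀ i : Fin g, ∑ j0 : Fin h,
            (if j0 = j then (g : ℝ)⁻¹ else 0) * (if j0 = j then (g : ℝ)⁻¹ else 0) * σγ2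
            = (g : ℝ)⁻¹ * (g : ℝ)⁻¹ * σγ2 := by
          intro i
          rw [Finset.sum_eq_single j]
          · simp
          · intro b _ hb; simp [hb]
          · intro habs; exact absurd (Finset.mem_univ j) habs
        rw [Finset.sum_congr rfl fun i _ => this i]
        simp only [Finset.sum_const, Finset.card_univ, Fintype.card_fin, nsmul_eq_mul, if_pos rfl]
        simp only [if_true]
        field_simp
      · rw [if_neg hjj]
        refine Finset.sum_eq_zero fun i _ => Finset.sum_eq_zero fun j0 _ => ?_
        by_cases h1 : j0 = j
        · have h2 : j0 ≠ j' := fun hc => hjj (h1 ▸ hc)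
          rw [if_neg h2, mul_zero, zero_mul]
        · simp [h1]
    rw [hβpart, hγpart, add_comm]
  refine ⟨main, fun j => ?_⟩
  have := main j j
  simpa using this
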